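/- Let N be a type, let c_1, …, c_K : N → [0,∞] be self-counting cost functions, and let w_1, …, w_K ≥ 0 be weights with Σ_{i=1}^K w_i ≤ 1. Then the compound cost function c(n) = min_{1 ≤ i ≤ K} c_i(n)/w_i, with the convention x/0 = ∞, is self-counting. -/

import Mathlib

open scoped ENNReal NNReal Classical

/-- A `[0,∞]`-valued cost function is self-counting if for every `θ ≥ 0` the set of nodes
of cost at most `θ` is finite and has at most `θ` elements. -/
def SelfCountingE {α : Type*} (c : α → ℝ≥0∞) : Prop :=
  ∀ θ : ℝ, 0 ≤ θ →
    {n | c n ≤ ENNReal.ofReal θ}.Finite ∧ ({n | c n ≤ ENNReal.ofReal θ}.ncard : ℝ) ≤ θ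

/-- composing self-counting cost functions `c_1, …, c_K` with weights
`w_1, …, w_K ≥ 0` summing to at most 1 via `c(n) = min_i c_i(n)/w_i`
(with the convention `x/0 = ∞`) yields a self-counting cost function. -/
theorem stmt7 {N : Type*} {K : ℕ} (c : Fin K → N → ℝ≥0∞)
    (hsc : ∀ i : Fin K, SelfCountingE (c i))
    (w : Fin K → ℝ≥0∞) (hw : ∑ i : Fin K, w i ≤ 1) :
    SelfCountingE (fun n => ⨅ i : Fin K, c i n / w i) := by
  intro θ hθ
  -- each cost is never 0
  have hpos : ∀ (i : Fin K) (n : N), c i n ≠ 0 := by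
    intro i n h0
    obtain ⟨hf, hc⟩ := hsc i 0 le_rfl
    have hmem : n ∈ {m | c i m ≤ ENNReal.ofReal 0} := by simp [h0]
    have : 0 < {m | c i m ≤ ENNReal.ofReal 0}.ncard :=
      (Set.ncard_pos hf).mpr ⟨n, hmem⟩
    have : (0 : ℝ) < ({m | c i m ≤ ENNReal.ofReal 0}.ncard : ℝ) := by exact_mod_cast this
    linarith
  have hwt : ∀ i : Fin K, w i ≠ ⊤ := by
    intro i h
    have h1 : w i ≤ ∑ j : Fin K, w j :=
      Finset.single_le_sum (fun j _ => zero_le) (Finset.mem_univ i)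
    have := h1.trans hw
    rw [h] at this
    exact (lt_irrefl _ (lt_of_le_of_lt this (by norm_num))).elim
  set T : Fin K → Set N := fun i => {n | c i n ≤ ENNReal.ofReal (θ * (w i).toReal)} with hT
  have hθi : ∀ i : Fin K, 0 ≤ θ * (w i).toReal := fun i =>
    mul_nonneg hθ ENNReal.toReal_nonneg
  have hTf : ∀ i : Fin K, (T i).Finite := fun i => (hsc i _ (hθi i)).1
  have hTc : ∀ i : Fin K, ((T i).ncard : ℝ) ≤ θ * (w i).toReal := fun i => (hsc i _ (hθi i)).2
  have hsub : {n | (fun n => ⨅ i : Fin K, c i n / w i) n ≤ ENNReal.ofReal θ} ⊆ ⋃ i, T i := by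
    intro n hn
    simp only [Set.mem_setOf_eq] at hn
    have hK : Nonempty (Fin K) := by
      by_contra h
      have : IsEmpty (Fin K) := not_nonempty_iff.mp h
      rw [iInf_of_empty] at hn
      exact ENNReal.ofReal_ne_top (top_le_iff.mp hn)
    obtain ⟨i, hi⟩ := Finite.exists_min (fun i => c i n / w i)
    have hile : c i n / w i ≤ ENNReal.ofReal θ := le_trans (le_iInf hi) hn
    have hw0 : w i ≠ 0 := by
      intro h
      rw [h, ENNReal.div_zero (hpos i n)] at hile
      exact ENNReal.ofReal_ne_top (top_le_iff.mp hile)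
    have hle : c i n ≤ ENNReal.ofReal θ * w i := (ENNReal.div_le_iff hw0 (hwt i)).mp hile
    have : ENNReal.ofReal θ * w i = ENNReal.ofReal (θ * (w i).toReal) := by
      rw [ENNReal.ofReal_mul hθ, ENNReal.ofReal_toReal (hwt i)]
    exact Set.mem_iUnion.mpr ⟨i, by simpa [T, this] using hle⟩
  have hUf : (⋃ i, T i).Finite := Set.finite_iUnion hTf
  refine ⟨hUf.subset hsub, ?_⟩
  have h1 : ({n | (fun n => ⨅ i : Fin K, c i n / w i) n ≤ ENNReal.ofReal θ}.ncard : ℝ)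
      ≤ ((⋃ i, T i).ncard : ℝ) := by
    exact_mod_cast Nat.cast_le.mpr (Set.ncard_le_ncard hsub hUf)
  refine h1.trans ?_
  -- card of union ≤ sum of cards
  have h2 : ((⋃ i, T i).ncard : ℝ) ≤ ∑ i : Fin K, ((T i).ncard : ℝ) := by
    have hfin : (⋃ i, T i) = ↑(Finset.univ.biUnion fun i => (hTf i).toFinset) := by
      ext n; simp [Set.Finite.mem_toFinset]
    rw [hfin, Set.ncard_coe_finset]
    have := Finset.card_biUnion_le (s := (Finset.univ : Finset (Fin K)))
      (t := fun i => (hTf i).toFinset)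
    calc ((Finset.univ.biUnion fun i => (hTf i).toFinset).card : ℝ)
        ≤ (∑ i : Fin K, ((hTf i).toFinset.card) : ℕ) := by exact_mod_cast this
      _ = ∑ i : Fin K, ((T i).ncard : ℝ) := by
          push_cast
          refine Finset.sum_congr rfl fun i _ => ?_
          rw [Set.ncard_eq_toFinset_card _ (hTf i)]
  refine h2.trans ?_
  have h3 : ∑ i : Fin K, ((T i).ncard : ℝ) ≤ ∑ i : Fin K, θ * (w i).toReal :=
    Finset.sum_le_sum fun i _ => hTc i
  refine h3.trans ?_
  rw [← Finset.mul_sum]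
  have h4 : ∑ i : Fin K, (w i).toReal ≤ 1 := by
    rw [← ENNReal.toReal_sum (fun i _ => hwt i)]
    calc (∑ i : Fin K, w i).toReal ≤ (1 : ℝ≥0∞).toReal :=
      ENNReal.toReal_mono (by norm_num) hw
      _ = 1 := by simp
  nlinarith [mul_le_mul_of_nonneg_left h4 hθ]
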